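/- Let m ≥ 2 and let Θ : 𝔻 → L(ℂʳ, ℂᵐ) be an inner matrix function (Θ*Θ = I_r a.e. on the circle) with 1 ≤ r ≤ m, and suppose Θ* Σ Θ ∈ H^∞_{r×r}, where Σ is the m×m matrix [[0, z^{k+1}I_γ],[z^k I_{m−γ}, 0]]. Then the subspace M = T_m(Θ H²(𝔻, ℂʳ)) ⊆ H²(𝔻) is invariant under S^m and under S^{km+γ}, where T_m(f₀,…,f_{m−1})(z) = Σ_{l=0}^{m−1} z^l f_l(z^m). -/
import Mathlib


/-- Abstract model of Theorem 4.1 (invariance under `S^m` and `S^{km+γ}`).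
`H` models `H²(𝔻)` (basis `e n ↔ zⁿ`, shift `S`); `K` models `H²(𝔻, ℂᵐ)` (basis
`c (l,n)`, componentwise shift `SK`); `T : K ≃ H` is the isometric isomorphism
`T_m(f₀,…,f_{m−1})(z) = Σ_l z^l f_l(z^m)`, i.e. `c (l,n) ↦ e (m·n + l)`.
`Sg` is multiplication by the inner matrix `Σ = [[0, z^{k+1} I_γ],[z^k I_{m−γ}, 0]]`.
`Kr` models `H²(𝔻, ℂʳ)` (basis `d`, shift `Sr`), and `Θ : Kr → K` is multiplication by an
inner `m×r` matrix function: an isometry intertwining the shifts.  The hypothesis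
`Θ*ΣΘ ∈ H^∞_{r×r}` means that for every `F`, `Σ(ΘF) = ΘG` for some `G ∈ H²(𝔻,ℂʳ)`.
Conclusion: `M = T_m(Θ H²(𝔻,ℂʳ))` is invariant under `S^m` and under `S^{km+γ}`. -/
theorem stmt_19 (m k γ r : ℕ) (hm : 2 ≤ m) (hk : 1 ≤ k) (hγ1 : 1 ≤ γ) (hγ2 : γ < m)
    (hr1 : 1 ≤ r) (hr2 : r ≤ m)
    {H K Kr : Type*}
    [NormedAddCommGroup H] [InnerProductSpace ℂ H] [CompleteSpace H]
    [NormedAddCommGroup K] [InnerProductSpace ℂ K] [CompleteSpace K]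
    [NormedAddCommGroup Kr] [InnerProductSpace ℂ Kr] [CompleteSpace Kr]
    (e : HilbertBasis ℕ ℂ H) (S : H →L[ℂ] H) (hS : ∀ n : ℕ, S (e n) = e (n + 1))
    (c : HilbertBasis (Fin m × ℕ) ℂ K) (SK : K →L[ℂ] K)
    (hSK : ∀ (l : Fin m) (n : ℕ), SK (c (l, n)) = c (l, n + 1))
    (T : K ≃ₗᵢ[ℂ] H) (hT : ∀ (l : Fin m) (n : ℕ), T (c (l, n)) = e (m * n + (l : ℕ)))
    (Sg : K →L[ℂ] K)
    (hSg1 : ∀ (j : Fin m) (n : ℕ) (h : (j : ℕ) < m - γ),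
      Sg (c (j, n)) = c (⟨(j : ℕ) + γ, by omega⟩, n + k))
    (hSg2 : ∀ (j : Fin m) (n : ℕ) (h : m - γ ≤ (j : ℕ)),
      Sg (c (j, n)) = c (⟨(j : ℕ) - (m - γ), by have := j.isLt; omega⟩, n + k + 1))
    (d : HilbertBasis (Fin r × ℕ) ℂ Kr) (Sr : Kr →L[ℂ] Kr)
    (hSr : ∀ (l : Fin r) (n : ℕ), Sr (d (l, n)) = d (l, n + 1))
    (Θ : Kr →L[ℂ] K) (hΘiso : ∀ x, ‖Θ x‖ = ‖x‖) (hΘS : ∀ x, Θ (Sr x) = SK (Θ x))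
    (hcond : ∀ F : Kr, ∃ G : Kr, Sg (Θ F) = Θ G)
    (M : Set H) (hMdef : M = (fun x => T x) '' (Set.range fun y => Θ y)) :
    (∀ f ∈ M, (S ^ m) f ∈ M) ∧ (∀ f ∈ M, (S ^ (k * m + γ)) f ∈ M) := by
  set T' := T.toLinearIsometry.toContinuousLinearMap with hT'
  have hT'app : ∀ x : K, T' x = T x := fun x => rfl
  have hSpow : ∀ (p n : ℕ), (S ^ p) (e n) = e (n + p) := by
    intro p
    induction p with
    | zero => intro n; simp
    | succ p ih =>
      intro n
      rw [pow_succ, ContinuousLinearMap.mul_apply, hS, ih]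
      congr 1; omega
  -- T intertwines SK with S^m
  have hTSK : ∀ x : K, T (SK x) = (S ^ m) (T x) := by
    have heq : T'.comp SK = (S ^ m).comp T' := by
      refine ContinuousLinearMap.ext_on (Submodule.dense_iff_topologicalClosure_eq_top.mpr (c.dense_span (𝕜 := ℂ))) ?_
      rintro x ⟨⟨l, n⟩, rfl⟩
      simp only [ContinuousLinearMap.comp_apply, hT'app, hSK, hT, hSpow]
      congr 1; ring
    intro x
    have := DFunLike.congr_fun heq x
    simpa [hT'app] using this
  -- T intertwines Sg with S^(k*m+γ)
  have hTSg : ∀ x : K, T (Sg x) = (S ^ (k * m + γ)) (T x) := by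
    have heq : T'.comp Sg = (S ^ (k * m + γ)).comp T' := by
      refine ContinuousLinearMap.ext_on (Submodule.dense_iff_topologicalClosure_eq_top.mpr (c.dense_span (𝕜 := ℂ))) ?_
      rintro x ⟨⟨j, n⟩, rfl⟩
      simp only [ContinuousLinearMap.comp_apply, hT'app]
      by_cases h : (j : ℕ) < m - γ
      · rw [hSg1 j n h, hT, hT, hSpow]
        congr 1
        ring
      · rw [hSg2 j n (le_of_not_gt h), hT, hT, hSpow]
        congr 1
        zify [le_of_not_gt h, Nat.le_of_lt hγ2]
        ring
    intro x
    have := DFunLike.congr_fun heq x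
    simpa [hT'app] using this
  constructor
  · rintro f hf
    rw [hMdef] at hf ⊢
    obtain ⟨x, ⟨y, rfl⟩, rfl⟩ := hf
    exact ⟨Θ (Sr y), ⟨Sr y, rfl⟩, by simp only [hΘS, hTSK]⟩
  · rintro f hf
    rw [hMdef] at hf ⊢
    obtain ⟨x, ⟨y, rfl⟩, rfl⟩ := hf
    obtain ⟨G, hG⟩ := hcond y
    exact ⟨Θ G, ⟨G, rfl⟩, by simp only [← hG, hTSg]⟩
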